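/- Assume the standing hypotheses with $C_{\phi,w}$ densely defined and $\alpha\in(0,1]$. Then $\Delta_\alpha(C_{\phi,w}) = C_{\phi,w_\alpha}$ (equivalently, $\Delta_\alpha(C_{\phi,w})$ is closed) if and only if there exists $c\in(0,\infty)$ such that $\mathsf{h}_{\phi,w}^{1-\alpha} \le c\big(1+\mathsf{E}_{\phi,w}(\mathsf{h}_{\phi,w}^\alpha)\circ\phi^{-1}\cdot\mathsf{h}_{\phi,w}^{1-\alpha}\big)$ a.e. $[\mu]$. -/

import Mathlib

open MeasureTheory ENNReal NNReal Filter Topology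

variable {X : Type*} [MeasurableSpace X]

/-- The measure `μ_w` with density `|w|²` with respect to `μ`. -/
noncomputable def wcMeasure (μ : Measure X) (w : X → ℂ) : Measure X :=
  μ.withDensity fun x => (‖w x‖₊ : ℝ≥0∞) ^ 2

/-- The Radon–Nikodym derivative `h_{φ,w} = d(μ_w ∘ φ⁻¹)/dμ`. -/
noncomputable def wcDeriv (μ : Measure X) (w : X → ℂ) (φ : X → X) : X → ℝ≥0∞ :=
  ((wcMeasure μ w).map φ).rnDeriv μ

/-- The modified weight `w_α = w · (h_{φ,w}/(h_{φ,w}∘φ))^{α/2}` (interpreted a.e.). -/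
noncomputable def wcAlpha (μ : Measure X) (w : X → ℂ) (φ : X → X) (α : ℝ) : X → ℂ :=
  fun x => w x * (((wcDeriv μ w φ x / wcDeriv μ w φ (φ x)) ^ (α / 2)).toReal : ℂ)

/-- `E` is (a version of) the conditional expectation of the nonnegative function `f`
with respect to the σ-algebra `φ⁻¹(𝒜)` and the measure `ν`. -/
def IsCondExp (φ : X → X) (ν : Measure X) (f E : X → ℝ≥0∞) : Prop :=
  Measurable[MeasurableSpace.comap φ inferInstance] E ∧
    ∀ s : Set X, MeasurableSet s → ∫⁻ x in φ ⁻¹' s, E x ∂ν = ∫⁻ x in φ ⁻¹' s, f x ∂ν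

/-- `g = E ∘ φ⁻¹`: the measurable function with `g ∘ φ = E` a.e. `[ν]`,
vanishing a.e. `[μ]` on the set where `h = 0`. -/
def IsQuot (φ : X → X) (μ ν : Measure X) (h : X → ℝ≥0∞) (E g : X → ℝ≥0∞) : Prop :=
  Measurable g ∧ (∀ᵐ x ∂ν, g (φ x) = E x) ∧ (∀ᵐ x ∂μ, h x = 0 → g x = 0)

/-- `E` is (a version of) the conditional expectation of the complex function `f`
with respect to the σ-algebra `φ⁻¹(𝒜)` and the measure `ν`. -/
def IsCondExpC (φ : X → X) (ν : Measure X) (f E : X → ℂ) : Prop :=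
  Measurable[MeasurableSpace.comap φ inferInstance] E ∧
    ∀ s : Set X, MeasurableSet s → ν (φ ⁻¹' s) < ⊤ →
      ∫ x in φ ⁻¹' s, E x ∂ν = ∫ x in φ ⁻¹' s, f x ∂ν

/-- `f_w = χ_{{w ≠ 0}} f / w`. -/
noncomputable def fw (w f : X → ℂ) : X → ℂ := fun x => if w x = 0 then 0 else f x / w x

/-- The weight `w̃ = w/(h_{φ,w}∘φ)^{1/2}` of the partial isometry in the polar
decomposition `C_{φ,w} = U |C_{φ,w}|`, `U = C_{φ,w̃}`. -/
noncomputable def wcTilde (μ : Measure X) (w : X → ℂ) (φ : X → X) : X → ℂ :=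
  fun x => w x * (((wcDeriv μ w φ (φ x)) ^ (-(1 / 2) : ℝ)).toReal : ℂ)

/-- The function `Δ_α(C_{φ,w}) f = |C_{φ,w}|^α U |C_{φ,w}|^{1-α} f`, computed via
`|C_{φ,w}| = M_{h^{1/2}}` and `U = C_{φ,w̃}`. -/
noncomputable def aluthgeFun (μ : Measure X) (w : X → ℂ) (φ : X → X) (α : ℝ) (f : X → ℂ) :
    X → ℂ :=
  fun x => ((wcDeriv μ w φ x ^ (α / 2)).toReal : ℂ) *
    (wcTilde μ w φ x * (((wcDeriv μ w φ (φ x)) ^ ((1 - α) / 2)).toReal : ℂ) * f (φ x))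

/-- Membership in the domain of the Aluthge transform
`Δ_α(C_{φ,w}) = |C_{φ,w}|^α U |C_{φ,w}|^{1-α}`. -/
noncomputable def aluthgeDom (μ : Measure X) (w : X → ℂ) (φ : X → X) (α : ℝ) (f : X → ℂ) :
    Prop :=
  MemLp f 2 μ ∧
  MemLp (fun x => ((wcDeriv μ w φ x ^ ((1 - α) / 2)).toReal : ℂ) * f x) 2 μ ∧
  MemLp (fun x =>
    wcTilde μ w φ x * (((wcDeriv μ w φ (φ x)) ^ ((1 - α) / 2)).toReal : ℂ) * f (φ x)) 2 μ ∧
  MemLp (aluthgeFun μ w φ α f) 2 μ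

noncomputable def awcV (μ : Measure X) (w : X → ℂ) (φ : X → X) (α : ℝ) : X → ℝ≥0∞ :=
  fun y => if wcDeriv μ w φ y = 0 ∨ wcDeriv μ w φ y = ∞ then 0 else wcDeriv μ w φ y ^ (-α)

noncomputable def awcK (μ : Measure X) (w : X → ℂ) (φ : X → X) (α : ℝ) : X → ℝ≥0∞ :=
  fun y => if wcDeriv μ w φ y = 0 then 0 else wcDeriv μ w φ y ^ (-α)

section Aux

variable {μ : Measure X} {w : X → ℂ} {φ : X → X} {α : ℝ}

lemma awc_meas_h : Measurable (wcDeriv μ w φ) := Measure.measurable_rnDeriv _ _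

lemma awc_meas_wsq (hw : Measurable w) : Measurable fun x => (‖w x‖₊ : ℝ≥0∞) ^ 2 :=
  (hw.nnnorm.coe_nnreal_ennreal).pow_const 2

lemma awc_map_eq (habs : (wcMeasure μ w).map φ ≪ μ) [SigmaFinite μ] :
    (wcMeasure μ w).map φ = μ.withDensity (wcDeriv μ w φ) := by
  haveI : SFinite ((wcMeasure μ w).map φ) := by unfold wcMeasure; infer_instance
  exact (Measure.withDensity_rnDeriv_eq _ _ habs).symm

/-- Lemma A : change of variables. -/
lemma awc_lintA [SigmaFinite μ] (hw : Measurable w) (hφ : Measurable φ)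
    (habs : (wcMeasure μ w).map φ ≪ μ) {G : X → ℝ≥0∞} (hG : Measurable G) :
    ∫⁻ x, (‖w x‖₊ : ℝ≥0∞) ^ 2 * G (φ x) ∂μ = ∫⁻ x, G x * wcDeriv μ w φ x ∂μ := by
  have hGφ : Measurable fun x => G (φ x) := hG.comp hφ
  have e1 : ∫⁻ x, G (φ x) ∂(wcMeasure μ w) = ∫⁻ x, (‖w x‖₊ : ℝ≥0∞) ^ 2 * G (φ x) ∂μ := by
    rw [wcMeasure, lintegral_withDensity_eq_lintegral_mul μ (awc_meas_wsq hw) hGφ]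
    rfl
  have e2 : ∫⁻ x, G (φ x) ∂(wcMeasure μ w) = ∫⁻ y, G y ∂((wcMeasure μ w).map φ) :=
    (lintegral_map hG hφ).symm
  rw [← e1, e2, awc_map_eq habs,
    lintegral_withDensity_eq_lintegral_mul μ awc_meas_h hG]
  exact lintegral_congr fun x => mul_comm _ _

/-- Lemma B : conditional expectation + change of variables. -/
lemma awc_lintB [SigmaFinite μ] (hw : Measurable w) (hφ : Measurable φ)
    (habs : (wcMeasure μ w).map φ ≪ μ) {E g : X → ℝ≥0∞}
    (hE : IsCondExp φ (wcMeasure μ w) (fun x => wcDeriv μ w φ x ^ α) E)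
    (hg : IsQuot φ μ (wcMeasure μ w) (wcDeriv μ w φ) E g)
    {G : X → ℝ≥0∞} (hG : Measurable G) :
    ∫⁻ x, (‖w x‖₊ : ℝ≥0∞) ^ 2 * (wcDeriv μ w φ x ^ α * G (φ x)) ∂μ
      = ∫⁻ x, g x * G x * wcDeriv μ w φ x ∂μ := by
  have hEm : Measurable E := hE.1.mono (measurable_iff_comap_le.mp hφ) le_rfl
  have hhm : Measurable fun x => wcDeriv μ w φ x ^ α :=
    awc_meas_h.pow_const α
  have hGφ : Measurable fun x => G (φ x) := hG.comp hφ
  have key : ((wcMeasure μ w).withDensity fun x => wcDeriv μ w φ x ^ α).map φ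
      = ((wcMeasure μ w).withDensity E).map φ := by
    ext s hs
    rw [Measure.map_apply hφ hs, Measure.map_apply hφ hs,
      withDensity_apply _ (hφ hs), withDensity_apply _ (hφ hs)]
    exact (hE.2 s hs).symm
  have hmul : Measurable fun x => wcDeriv μ w φ x ^ α * G (φ x) := hhm.mul hGφ
  have hgφ : Measurable fun x => g (φ x) := hg.1.comp hφ
  have hG2 : Measurable fun x => g (φ x) * G (φ x) := hgφ.mul hGφ
  calc ∫⁻ x, (‖w x‖₊ : ℝ≥0∞) ^ 2 * (wcDeriv μ w φ x ^ α * G (φ x)) ∂μ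
      = ∫⁻ x, wcDeriv μ w φ x ^ α * G (φ x) ∂(wcMeasure μ w) := by
        rw [wcMeasure, lintegral_withDensity_eq_lintegral_mul μ (awc_meas_wsq hw) hmul]; rfl
    _ = ∫⁻ x, G (φ x) ∂((wcMeasure μ w).withDensity fun x => wcDeriv μ w φ x ^ α) := by
        rw [lintegral_withDensity_eq_lintegral_mul _ hhm hGφ]; rfl
    _ = ∫⁻ y, G y ∂(((wcMeasure μ w).withDensity fun x => wcDeriv μ w φ x ^ α).map φ) :=
        (lintegral_map hG hφ).symm
    _ = ∫⁻ y, G y ∂(((wcMeasure μ w).withDensity E).map φ) := by rw [key]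
    _ = ∫⁻ x, G (φ x) ∂((wcMeasure μ w).withDensity E) := lintegral_map hG hφ
    _ = ∫⁻ x, E x * G (φ x) ∂(wcMeasure μ w) := by
        rw [lintegral_withDensity_eq_lintegral_mul _ hEm hGφ]; rfl
    _ = ∫⁻ x, g (φ x) * G (φ x) ∂(wcMeasure μ w) :=
        (lintegral_congr_ae (hg.2.1.mono fun x hx => by rw [hx])).symm
    _ = ∫⁻ x, (‖w x‖₊ : ℝ≥0∞) ^ 2 * ((fun y => g y * G y) (φ x)) ∂μ := by
        rw [wcMeasure, lintegral_withDensity_eq_lintegral_mul μ (awc_meas_wsq hw)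
          hG2]; rfl
    _ = ∫⁻ x, g x * G x * wcDeriv μ w φ x ∂μ := awc_lintA hw hφ habs (hg.1.mul hG)

lemma awc_memLp_iff {u : X → ℂ} (hu : AEStronglyMeasurable u μ) :
    MemLp u 2 μ ↔ ∫⁻ x, (‖u x‖₊ : ℝ≥0∞) ^ 2 ∂μ < ⊤ := by
  have h2 : ∀ t : ℝ≥0∞, t ^ ((2 : ℝ≥0∞)).toReal = t ^ 2 := fun t => by
    rw [ENNReal.toReal_ofNat, show ((2 : ℝ)) = ((2 : ℕ) : ℝ) by norm_num,
      ENNReal.rpow_natCast]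
  have hrw : eLpNorm u 2 μ = (∫⁻ x, (‖u x‖₊ : ℝ≥0∞) ^ 2 ∂μ) ^ (1 / (2 : ℝ)) := by
    rw [eLpNorm_eq_lintegral_rpow_enorm_toReal two_ne_zero ENNReal.ofNat_ne_top]
    simp_rw [enorm_eq_nnnorm, h2]
    norm_num
  constructor
  · rintro ⟨-, h⟩
    rw [hrw] at h
    exact (ENNReal.rpow_lt_top_iff_of_pos (by norm_num)).mp h
  · intro h
    exact ⟨hu, by rw [hrw]; exact ENNReal.rpow_lt_top_of_nonneg (by norm_num) h.ne⟩

lemma awc_C1 {t : ℝ≥0∞} {β : ℝ} (ht : t ^ β ≠ ∞) :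
    (ENNReal.ofReal ((t ^ β).toReal)) ^ 2 = t ^ (β * 2) := by
  rw [ENNReal.ofReal_toReal ht, ← ENNReal.rpow_natCast (t ^ β) 2, ← ENNReal.rpow_mul]
  norm_num

lemma awc_nnnorm_coe (r : ℝ≥0∞) :
    ((‖((r.toReal : ℝ) : ℂ)‖₊ : ℝ≥0∞)) = ENNReal.ofReal r.toReal := by
  rw [Complex.nnnorm_real]
  exact Real.enorm_eq_ofReal ENNReal.toReal_nonneg

lemma awc_PD {a b : ℝ≥0∞} (ha : a ≠ ∞) (hα : 0 < α) :
    (ENNReal.ofReal (((a / b) ^ (α / 2)).toReal)) ^ 2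
      = a ^ α * (if b = 0 then 0 else b ^ (-α)) := by
  rcases eq_or_ne b 0 with rfl | hb
  · simp only [if_pos rfl, mul_zero]
    rcases eq_or_ne a 0 with rfl | ha0
    · rw [ENNReal.zero_div, ENNReal.zero_rpow_of_pos (by positivity)]
      simp
    · rw [ENNReal.div_zero ha0, ENNReal.top_rpow_of_pos (by positivity)]
      simp
  · rw [if_neg hb]
    have hd : a / b ≠ ∞ := (ENNReal.div_lt_top ha hb).ne
    rw [awc_C1 (ENNReal.rpow_ne_top_of_nonneg (by positivity) hd),
      show α / 2 * 2 = α by ring, div_eq_mul_inv,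
      ENNReal.mul_rpow_of_nonneg _ _ hα.le, ENNReal.inv_rpow, ← ENNReal.rpow_neg]

lemma awc_PV {b : ℝ≥0∞} (hα : α ∈ Set.Ioc (0 : ℝ) 1) :
    (ENNReal.ofReal ((b ^ (-(1 / 2) : ℝ)).toReal)) ^ 2 *
      (ENNReal.ofReal ((b ^ ((1 - α) / 2)).toReal)) ^ 2
      = if b = 0 ∨ b = ∞ then 0 else b ^ (-α) := by
  rcases eq_or_ne b 0 with rfl | hb0
  · rw [ENNReal.zero_rpow_of_neg (by norm_num)]
    simp
  rcases eq_or_ne b ∞ with rfl | hbt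
  · rw [ENNReal.top_rpow_of_neg (by norm_num)]
    simp
  · rw [if_neg (by tauto)]
    have h1 : b ^ (-(1 / 2) : ℝ) ≠ ∞ := by
      simp [ENNReal.rpow_eq_top_iff, hb0, hbt]
    have h2 : b ^ ((1 - α) / 2) ≠ ∞ :=
      ENNReal.rpow_ne_top_of_nonneg (by linarith [hα.2]) hbt
    rw [awc_C1 h1, awc_C1 h2, show (-(1 / 2) : ℝ) * 2 = -1 by ring,
      show (1 - α) / 2 * 2 = 1 - α by ring, ← ENNReal.rpow_add _ _ hb0 hbt,
      show (-1 + (1 - α) : ℝ) = -α by ring]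

lemma awc_Pt {t : ℝ≥0∞} (ht : t ≠ ∞) {β : ℝ} (hβ : 0 ≤ β) :
    (ENNReal.ofReal ((t ^ (β / 2)).toReal)) ^ 2 = t ^ β := by
  rw [awc_C1 (ENNReal.rpow_ne_top_of_nonneg (by positivity) ht),
    show β / 2 * 2 = β by ring]

/-- a.e. transfer of compositions through `φ` on the support of `w`. -/
lemma awc_comp_ae (hw : Measurable w) (hφ : Measurable φ)
    (habs : (wcMeasure μ w).map φ ≪ μ) {f f' : X → ℂ} (hff' : f =ᵐ[μ] f') :
    ∀ᵐ x ∂μ, w x ≠ 0 → f (φ x) = f' (φ x) := by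
  obtain ⟨S, hSsub, hSm, hS0⟩ :=
    exists_measurable_superset_of_null (s := {x | f x ≠ f' x}) hff'
  have hmap : ((wcMeasure μ w).map φ) S = 0 := habs hS0
  have hpre : (wcMeasure μ w) (φ ⁻¹' S) = 0 := by
    rwa [Measure.map_apply hφ hSm] at hmap
  have h0 : ∫⁻ x in φ ⁻¹' S, (‖w x‖₊ : ℝ≥0∞) ^ 2 ∂μ = 0 := by
    rw [wcMeasure, withDensity_apply _ (hφ hSm)] at hpre
    exact hpre
  have hae : ∀ᵐ x ∂μ.restrict (φ ⁻¹' S), (‖w x‖₊ : ℝ≥0∞) ^ 2 = 0 :=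
    (lintegral_eq_zero_iff (awc_meas_wsq hw)).mp h0
  have hae2 : ∀ᵐ x ∂μ, x ∈ φ ⁻¹' S → (‖w x‖₊ : ℝ≥0∞) ^ 2 = 0 :=
    (ae_restrict_iff' (hφ hSm)).mp hae
  filter_upwards [hae2] with x hx hwx
  by_cases hmem : φ x ∈ S
  · exact absurd (hx hmem) (by simp [hwx])
  · by_contra hne
    exact hmem (hSsub hne)

lemma awc_measV : Measurable (awcV μ w φ α) := by
  unfold awcV
  have hs : MeasurableSet {y | wcDeriv μ w φ y = 0 ∨ wcDeriv μ w φ y = ∞} := by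
    simp only [Set.setOf_or]
    exact (awc_meas_h (measurableSet_singleton 0)).union
      (awc_meas_h (measurableSet_singleton ∞))
  exact Measurable.ite hs measurable_const (awc_meas_h.pow_const _)

lemma awc_measK : Measurable (awcK μ w φ α) := by
  unfold awcK
  exact Measurable.ite (awc_meas_h (measurableSet_singleton 0)) measurable_const
    (awc_meas_h.pow_const _)

lemma awc_R2 (hfin : ∀ᵐ x ∂μ, wcDeriv μ w φ x < ⊤) (hα : α ∈ Set.Ioc (0 : ℝ) 1)
    (f : X → ℂ) :
    ∫⁻ x, (‖(((wcDeriv μ w φ x ^ ((1 - α) / 2)).toReal : ℝ) : ℂ) * f x‖₊ : ℝ≥0∞) ^ 2 ∂μ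
      = ∫⁻ x, wcDeriv μ w φ x ^ (1 - α) * (‖f x‖₊ : ℝ≥0∞) ^ 2 ∂μ := by
  refine lintegral_congr_ae ?_
  filter_upwards [hfin] with x hx
  rw [nnnorm_mul, ENNReal.coe_mul, mul_pow, awc_nnnorm_coe,
    awc_Pt hx.ne (by linarith [hα.2])]

lemma awc_R3 [SigmaFinite μ] (hw : Measurable w) (hφ : Measurable φ)
    (habs : (wcMeasure μ w).map φ ≪ μ)
    (hfin : ∀ᵐ x ∂μ, wcDeriv μ w φ x < ⊤) (hα : α ∈ Set.Ioc (0 : ℝ) 1)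
    {f : X → ℂ} (hf : Measurable f) :
    ∫⁻ x, (‖wcTilde μ w φ x * (((wcDeriv μ w φ (φ x) ^ ((1 - α) / 2)).toReal : ℝ) : ℂ) *
        f (φ x)‖₊ : ℝ≥0∞) ^ 2 ∂μ
      = ∫⁻ x, (if wcDeriv μ w φ x = 0 then 0 else wcDeriv μ w φ x ^ (1 - α)) *
          (‖f x‖₊ : ℝ≥0∞) ^ 2 ∂μ := by
  have expand : ∀ x, (‖wcTilde μ w φ x *
        (((wcDeriv μ w φ (φ x) ^ ((1 - α) / 2)).toReal : ℝ) : ℂ) * f (φ x)‖₊ : ℝ≥0∞) ^ 2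
      = (‖w x‖₊ : ℝ≥0∞) ^ 2 *
          ((fun y => awcV μ w φ α y * (‖f y‖₊ : ℝ≥0∞) ^ 2) (φ x)) := by
    intro x
    simp only [wcTilde, nnnorm_mul, ENNReal.coe_mul, mul_pow, awc_nnnorm_coe]
    rw [show awcV μ w φ α (φ x) = _ from (awc_PV (b := wcDeriv μ w φ (φ x)) hα).symm]
    ring
  rw [lintegral_congr expand,
    awc_lintA hw hφ habs (G := fun y => awcV μ w φ α y * (‖f y‖₊ : ℝ≥0∞) ^ 2) (awc_measV.mul ((hf.nnnorm.coe_nnreal_ennreal).pow_const 2))]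
  refine lintegral_congr_ae ?_
  filter_upwards [hfin] with x hx
  by_cases h0 : wcDeriv μ w φ x = 0
  · simp [awcV, h0]
  · have hrp : wcDeriv μ w φ x ^ (-α) * wcDeriv μ w φ x = wcDeriv μ w φ x ^ (1 - α) := by
      nth_rewrite 2 [← ENNReal.rpow_one (wcDeriv μ w φ x)]
      rw [← ENNReal.rpow_add _ _ h0 hx.ne, show (-α + 1 : ℝ) = 1 - α by ring]
    simp only [awcV, if_neg (not_or.mpr ⟨h0, hx.ne⟩), if_neg h0]
    rw [← hrp]; ring

lemma awc_R5 [SigmaFinite μ] (hw : Measurable w) (hφ : Measurable φ)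
    (habs : (wcMeasure μ w).map φ ≪ μ)
    (hfin : ∀ᵐ x ∂μ, wcDeriv μ w φ x < ⊤) (hα : α ∈ Set.Ioc (0 : ℝ) 1)
    {E g : X → ℝ≥0∞}
    (hE : IsCondExp φ (wcMeasure μ w) (fun x => wcDeriv μ w φ x ^ α) E)
    (hg : IsQuot φ μ (wcMeasure μ w) (wcDeriv μ w φ) E g)
    {f : X → ℂ} (hf : Measurable f) :
    ∫⁻ x, (‖wcAlpha μ w φ α x * f (φ x)‖₊ : ℝ≥0∞) ^ 2 ∂μ
      = ∫⁻ x, g x * wcDeriv μ w φ x ^ (1 - α) * (‖f x‖₊ : ℝ≥0∞) ^ 2 ∂μ := by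
  have step1 : ∫⁻ x, (‖wcAlpha μ w φ α x * f (φ x)‖₊ : ℝ≥0∞) ^ 2 ∂μ
      = ∫⁻ x, (‖w x‖₊ : ℝ≥0∞) ^ 2 * (wcDeriv μ w φ x ^ α *
          ((fun y => awcK μ w φ α y * (‖f y‖₊ : ℝ≥0∞) ^ 2) (φ x))) ∂μ := by
    refine lintegral_congr_ae ?_
    filter_upwards [hfin] with x hx
    simp only [wcAlpha, nnnorm_mul, ENNReal.coe_mul, mul_pow, awc_nnnorm_coe]
    rw [awc_PD hx.ne hα.1]
    simp only [awcK]
    ring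
  rw [step1, awc_lintB hw hφ habs hE hg (G := fun y => awcK μ w φ α y * (‖f y‖₊ : ℝ≥0∞) ^ 2)
    (awc_measK.mul ((hf.nnnorm.coe_nnreal_ennreal).pow_const 2))]
  refine lintegral_congr_ae ?_
  filter_upwards [hfin, hg.2.2] with x hx hg0
  by_cases h0 : wcDeriv μ w φ x = 0
  · simp [awcK, h0, hg0 h0]
  · have hrp : wcDeriv μ w φ x ^ (-α) * wcDeriv μ w φ x = wcDeriv μ w φ x ^ (1 - α) := by
      nth_rewrite 2 [← ENNReal.rpow_one (wcDeriv μ w φ x)]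
      rw [← ENNReal.rpow_add _ _ h0 hx.ne, show (-α + 1 : ℝ) = 1 - α by ring]
    simp only [awcK, if_neg h0]
    rw [← hrp]; ring

lemma awc_R4 [SigmaFinite μ] (hw : Measurable w) (hφ : Measurable φ)
    (habs : (wcMeasure μ w).map φ ≪ μ)
    (hfin : ∀ᵐ x ∂μ, wcDeriv μ w φ x < ⊤) (hα : α ∈ Set.Ioc (0 : ℝ) 1)
    {E g : X → ℝ≥0∞}
    (hE : IsCondExp φ (wcMeasure μ w) (fun x => wcDeriv μ w φ x ^ α) E)
    (hg : IsQuot φ μ (wcMeasure μ w) (wcDeriv μ w φ) E g)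
    {f : X → ℂ} (hf : Measurable f) :
    ∫⁻ x, (‖aluthgeFun μ w φ α f x‖₊ : ℝ≥0∞) ^ 2 ∂μ
      = ∫⁻ x, g x * wcDeriv μ w φ x ^ (1 - α) * (‖f x‖₊ : ℝ≥0∞) ^ 2 ∂μ := by
  have step1 : ∫⁻ x, (‖aluthgeFun μ w φ α f x‖₊ : ℝ≥0∞) ^ 2 ∂μ
      = ∫⁻ x, (‖w x‖₊ : ℝ≥0∞) ^ 2 * (wcDeriv μ w φ x ^ α *
          ((fun y => awcV μ w φ α y * (‖f y‖₊ : ℝ≥0∞) ^ 2) (φ x))) ∂μ := by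
    refine lintegral_congr_ae ?_
    filter_upwards [hfin] with x hx
    simp only [aluthgeFun, wcTilde, nnnorm_mul, ENNReal.coe_mul, mul_pow, awc_nnnorm_coe]
    rw [awc_Pt hx.ne hα.1.le,
      show awcV μ w φ α (φ x) = _ from (awc_PV (b := wcDeriv μ w φ (φ x)) hα).symm]
    ring
  rw [step1, awc_lintB hw hφ habs hE hg (G := fun y => awcV μ w φ α y * (‖f y‖₊ : ℝ≥0∞) ^ 2)
    (awc_measV.mul ((hf.nnnorm.coe_nnreal_ennreal).pow_const 2))]
  refine lintegral_congr_ae ?_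
  filter_upwards [hfin, hg.2.2] with x hx hg0
  by_cases h0 : wcDeriv μ w φ x = 0
  · simp [awcV, h0, hg0 h0]
  · have hrp : wcDeriv μ w φ x ^ (-α) * wcDeriv μ w φ x = wcDeriv μ w φ x ^ (1 - α) := by
      nth_rewrite 2 [← ENNReal.rpow_one (wcDeriv μ w φ x)]
      rw [← ENNReal.rpow_add _ _ h0 hx.ne, show (-α + 1 : ℝ) = 1 - α by ring]
    simp only [awcV, if_neg (not_or.mpr ⟨h0, hx.ne⟩), if_neg h0]
    rw [← hrp]; ring

lemma awc_meas_coe (β : ℝ) (hφ : Measurable φ) :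
    Measurable fun x => (((wcDeriv μ w φ (φ x) ^ β).toReal : ℝ) : ℂ) :=
  Complex.measurable_ofReal.comp ((awc_meas_h.comp hφ).pow_const β).ennreal_toReal

lemma awc_meas_coe' (β : ℝ) :
    Measurable fun x => (((wcDeriv μ w φ x ^ β).toReal : ℝ) : ℂ) :=
  Complex.measurable_ofReal.comp (awc_meas_h.pow_const β).ennreal_toReal

lemma awc_meas_wcAlpha (hw : Measurable w) (hφ : Measurable φ) :
    Measurable (wcAlpha μ w φ α) := by
  unfold wcAlpha
  exact hw.mul (Complex.measurable_ofReal.comp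
    (((awc_meas_h.div (awc_meas_h.comp hφ)).pow_const _).ennreal_toReal))

lemma awc_meas_wcTilde (hw : Measurable w) (hφ : Measurable φ) :
    Measurable (wcTilde μ w φ) := by
  unfold wcTilde
  exact hw.mul (awc_meas_coe _ hφ)

/-- Reduction of `aluthgeDom` to finiteness of three lintegrals. -/
lemma awc_DOM [SigmaFinite μ] (hw : Measurable w) (hφ : Measurable φ)
    (habs : (wcMeasure μ w).map φ ≪ μ)
    (hfin : ∀ᵐ x ∂μ, wcDeriv μ w φ x < ⊤) (hα : α ∈ Set.Ioc (0 : ℝ) 1)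
    {E g : X → ℝ≥0∞}
    (hE : IsCondExp φ (wcMeasure μ w) (fun x => wcDeriv μ w φ x ^ α) E)
    (hg : IsQuot φ μ (wcMeasure μ w) (wcDeriv μ w φ) E g)
    {f f' : X → ℂ} (hf' : Measurable f') (hff' : f =ᵐ[μ] f') :
    aluthgeDom μ w φ α f ↔
      (∫⁻ x, (‖f' x‖₊ : ℝ≥0∞) ^ 2 ∂μ < ⊤ ∧
       ∫⁻ x, wcDeriv μ w φ x ^ (1 - α) * (‖f' x‖₊ : ℝ≥0∞) ^ 2 ∂μ < ⊤ ∧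
       ∫⁻ x, g x * wcDeriv μ w φ x ^ (1 - α) * (‖f' x‖₊ : ℝ≥0∞) ^ 2 ∂μ < ⊤) := by
  have hcomp := awc_comp_ae hw hφ habs hff'
  have e2 : (fun x => (((wcDeriv μ w φ x ^ ((1 - α) / 2)).toReal : ℝ) : ℂ) * f x)
      =ᵐ[μ] (fun x => (((wcDeriv μ w φ x ^ ((1 - α) / 2)).toReal : ℝ) : ℂ) * f' x) :=
    hff'.mono fun x hx => by dsimp only; rw [hx]
  have e3 : (fun x => wcTilde μ w φ x *
        (((wcDeriv μ w φ (φ x) ^ ((1 - α) / 2)).toReal : ℝ) : ℂ) * f (φ x))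
      =ᵐ[μ] (fun x => wcTilde μ w φ x *
        (((wcDeriv μ w φ (φ x) ^ ((1 - α) / 2)).toReal : ℝ) : ℂ) * f' (φ x)) :=
    hcomp.mono fun x hx => by
      by_cases hw0 : w x = 0
      · simp [wcTilde, hw0]
      · dsimp only; rw [hx hw0]
  have e4 : aluthgeFun μ w φ α f =ᵐ[μ] aluthgeFun μ w φ α f' :=
    hcomp.mono fun x hx => by
      by_cases hw0 : w x = 0
      · simp [aluthgeFun, wcTilde, hw0]
      · simp only [aluthgeFun]
        rw [hx hw0]
  have m1 : AEStronglyMeasurable f' μ := hf'.aestronglyMeasurable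
  have m2 : AEStronglyMeasurable
      (fun x => (((wcDeriv μ w φ x ^ ((1 - α) / 2)).toReal : ℝ) : ℂ) * f' x) μ :=
    ((awc_meas_coe' _).mul hf').aestronglyMeasurable
  have m3 : AEStronglyMeasurable (fun x => wcTilde μ w φ x *
      (((wcDeriv μ w φ (φ x) ^ ((1 - α) / 2)).toReal : ℝ) : ℂ) * f' (φ x)) μ :=
    (((awc_meas_wcTilde hw hφ).mul (awc_meas_coe _ hφ)).mul
      (hf'.comp hφ)).aestronglyMeasurable
  have m4 : AEStronglyMeasurable (aluthgeFun μ w φ α f') μ := by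
    unfold aluthgeFun
    exact ((awc_meas_coe' _).mul (((awc_meas_wcTilde hw hφ).mul
      (awc_meas_coe _ hφ)).mul (hf'.comp hφ))).aestronglyMeasurable
  unfold aluthgeDom
  rw [memLp_congr_ae hff', memLp_congr_ae e2, memLp_congr_ae e3, memLp_congr_ae e4,
    awc_memLp_iff m1, awc_memLp_iff m2, awc_memLp_iff m3, awc_memLp_iff m4,
    awc_R2 hfin hα f', awc_R3 hw hφ habs hfin hα hf', awc_R4 hw hφ habs hfin hα hE hg hf']
  have hA3le : ∫⁻ x, (if wcDeriv μ w φ x = 0 then 0 else wcDeriv μ w φ x ^ (1 - α)) *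
        (‖f' x‖₊ : ℝ≥0∞) ^ 2 ∂μ
      ≤ ∫⁻ x, wcDeriv μ w φ x ^ (1 - α) * (‖f' x‖₊ : ℝ≥0∞) ^ 2 ∂μ := by
    refine lintegral_mono fun x => ?_
    by_cases h0 : wcDeriv μ w φ x = 0
    · simp [h0]
    · simp [h0]
  constructor
  · rintro ⟨h1, h2, _, h4⟩
    exact ⟨h1, h2, h4⟩
  · rintro ⟨h1, h2, h4⟩
    exact ⟨h1, h2, lt_of_le_of_lt hA3le h2, h4⟩

/-- Reduction of membership in the domain of `C_{φ,w_α}` (together with `L²`). -/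
lemma awc_PAIR [SigmaFinite μ] (hw : Measurable w) (hφ : Measurable φ)
    (habs : (wcMeasure μ w).map φ ≪ μ)
    (hfin : ∀ᵐ x ∂μ, wcDeriv μ w φ x < ⊤) (hα : α ∈ Set.Ioc (0 : ℝ) 1)
    {E g : X → ℝ≥0∞}
    (hE : IsCondExp φ (wcMeasure μ w) (fun x => wcDeriv μ w φ x ^ α) E)
    (hg : IsQuot φ μ (wcMeasure μ w) (wcDeriv μ w φ) E g)
    {f f' : X → ℂ} (hf' : Measurable f') (hff' : f =ᵐ[μ] f') :
    (MemLp f 2 μ ∧ MemLp (fun x => wcAlpha μ w φ α x * f (φ x)) 2 μ) ↔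
      (∫⁻ x, (‖f' x‖₊ : ℝ≥0∞) ^ 2 ∂μ < ⊤ ∧
       ∫⁻ x, g x * wcDeriv μ w φ x ^ (1 - α) * (‖f' x‖₊ : ℝ≥0∞) ^ 2 ∂μ < ⊤) := by
  have hcomp := awc_comp_ae hw hφ habs hff'
  have e5 : (fun x => wcAlpha μ w φ α x * f (φ x))
      =ᵐ[μ] (fun x => wcAlpha μ w φ α x * f' (φ x)) :=
    hcomp.mono fun x hx => by
      by_cases hw0 : w x = 0
      · simp [wcAlpha, hw0]
      · dsimp only; rw [hx hw0]
  have m1 : AEStronglyMeasurable f' μ := hf'.aestronglyMeasurable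
  have m5 : AEStronglyMeasurable (fun x => wcAlpha μ w φ α x * f' (φ x)) μ :=
    ((awc_meas_wcAlpha hw hφ).mul (hf'.comp hφ)).aestronglyMeasurable
  rw [memLp_congr_ae hff', memLp_congr_ae e5, awc_memLp_iff m1, awc_memLp_iff m5,
    awc_R5 hw hφ habs hfin hα hE hg hf']

end Aux

section Main

variable {μ : Measure X} {w : X → ℂ} {φ : X → X} {α : ℝ}

theorem aluthge_wco_transform_eq_iff'
    (μ : Measure X) [SigmaFinite μ] (w : X → ℂ) (φ : X → X)
    (hw : Measurable w) (hφ : Measurable φ)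
    (habs : (wcMeasure μ w).map φ ≪ μ)
    (hfin : ∀ᵐ x ∂μ, wcDeriv μ w φ x < ⊤)
    (α : ℝ) (hα : α ∈ Set.Ioc (0 : ℝ) 1)
    (E g : X → ℝ≥0∞)
    (hE : IsCondExp φ (wcMeasure μ w) (fun x => wcDeriv μ w φ x ^ α) E)
    (hg : IsQuot φ μ (wcMeasure μ w) (wcDeriv μ w φ) E g) :
    (∀ f : X → ℂ, AEStronglyMeasurable f μ →
      (aluthgeDom μ w φ α f ↔
        (MemLp f 2 μ ∧ MemLp (fun x => wcAlpha μ w φ α x * f (φ x)) 2 μ))) ↔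
    ∃ c : ℝ≥0, 0 < c ∧ ∀ᵐ x ∂μ,
      wcDeriv μ w φ x ^ (1 - α) ≤
        (c : ℝ≥0∞) * (1 + g x * wcDeriv μ w φ x ^ (1 - α)) := by
  constructor
  · intro H
    by_contra hno
    push_neg at hno
    have hDm : Measurable (wcDeriv μ w φ) := awc_meas_h (μ := μ) (w := w) (φ := φ)
    have hfin0 : μ {x | ¬ wcDeriv μ w φ x < ⊤} = 0 := ae_iff.mp hfin
    have key : ∀ n : ℕ, ∃ B : Set X, MeasurableSet B ∧ μ B ≠ 0 ∧ μ B < ⊤ ∧ ∃ M : ℕ,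
        ∀ x ∈ B, ((2 : ℝ≥0∞) ^ n * (1 + g x * wcDeriv μ w φ x ^ (1 - α))
            < wcDeriv μ w φ x ^ (1 - α)) ∧
          wcDeriv μ w φ x ^ (1 - α) ≤ (M : ℝ≥0∞) := by
      intro n
      have hpos : (0 : ℝ≥0) < 2 ^ n := by positivity
      have hne : μ {x | ¬ wcDeriv μ w φ x ^ (1 - α) ≤
          (((2 : ℝ≥0) ^ n : ℝ≥0) : ℝ≥0∞) * (1 + g x * wcDeriv μ w φ x ^ (1 - α))} ≠ 0 :=
        fun h0 => hno (2 ^ n) hpos ((ae_iff.mpr h0).mono fun x hx => not_lt.mpr hx)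
      set S := {x | ¬ wcDeriv μ w φ x ^ (1 - α) ≤
          (((2 : ℝ≥0) ^ n : ℝ≥0) : ℝ≥0∞) * (1 + g x * wcDeriv μ w φ x ^ (1 - α))} with hS
      have hSm : MeasurableSet S := by
        have hle : MeasurableSet {x | wcDeriv μ w φ x ^ (1 - α) ≤
            (((2 : ℝ≥0) ^ n : ℝ≥0) : ℝ≥0∞) * (1 + g x * wcDeriv μ w φ x ^ (1 - α))} :=
          measurableSet_le (hDm.pow_const _)
            (measurable_const.mul (measurable_const.add (hg.1.mul (hDm.pow_const _))))
        have : S = {x | wcDeriv μ w φ x ^ (1 - α) ≤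
            (((2 : ℝ≥0) ^ n : ℝ≥0) : ℝ≥0∞) * (1 + g x * wcDeriv μ w φ x ^ (1 - α))}ᶜ := by
          rw [hS]; ext x; simp
        rw [this]
        exact hle.compl
      set T : ℕ → Set X := fun m => (S ∩ spanningSets μ m) ∩
        {x | wcDeriv μ w φ x ^ (1 - α) ≤ (m : ℝ≥0∞)} with hT
      have hTm : ∀ m, MeasurableSet (T m) := fun m =>
        (hSm.inter (measurableSet_spanningSets μ m)).inter
          (measurableSet_le (hDm.pow_const _) measurable_const)
      have hcover : S ⊆ (⋃ m, T m) ∪ {x | ¬ wcDeriv μ w φ x < ⊤} := by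
        intro x hx
        by_cases hxf : wcDeriv μ w φ x < ⊤
        · left
          obtain ⟨m1, hm1⟩ : ∃ m1, x ∈ spanningSets μ m1 := by
            have h1 : x ∈ ⋃ i, spanningSets μ i := by
              rw [MeasureTheory.iUnion_spanningSets μ]; trivial
            exact Set.mem_iUnion.mp h1
          obtain ⟨m2, hm2⟩ := ENNReal.exists_nat_gt
            (ENNReal.rpow_ne_top_of_nonneg (show (0:ℝ) ≤ 1 - α by linarith [hα.2]) hxf.ne)
          refine Set.mem_iUnion.mpr ⟨max m1 m2,
            ⟨⟨hx, monotone_spanningSets μ (le_max_left _ _) hm1⟩, ?_⟩⟩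
          have : ((m2 : ℝ≥0∞)) ≤ ((max m1 m2 : ℕ) : ℝ≥0∞) :=
            Nat.cast_le.mpr (le_max_right m1 m2)
          exact le_trans hm2.le this
        · right; exact hxf
      obtain ⟨m, hm⟩ : ∃ m, μ (T m) ≠ 0 := by
        by_contra hall
        push_neg at hall
        have hU : μ ((⋃ m, T m) ∪ {x | ¬ wcDeriv μ w φ x < ⊤}) = 0 := by
          refine measure_union_null ?_ hfin0
          exact measure_iUnion_null hall
        exact hne (measure_mono_null hcover hU)
      refine ⟨T m, hTm m, hm, ?_, m, ?_⟩
      · exact lt_of_le_of_lt (measure_mono fun x hx => hx.1.2)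
          (measure_spanningSets_lt_top μ m)
      · intro x hx
        refine ⟨?_, hx.2⟩
        have hxS : x ∈ S := hx.1.1
        rw [hS] at hxS
        have h2 := not_le.mp hxS
        have hcast : (((2 : ℝ≥0) ^ n : ℝ≥0) : ℝ≥0∞) = (2 : ℝ≥0∞) ^ n := by
          push_cast; ring
        rwa [hcast] at h2
    choose B hBm hB0 hBfin M hBprop using key
    set s : ℕ → ℝ≥0∞ := fun n => ∫⁻ x in B n, wcDeriv μ w φ x ^ (1 - α) ∂μ with hs
    have h2n0 : ∀ n : ℕ, ((2 : ℝ≥0∞) ^ n) ≠ 0 := fun n => pow_ne_zero _ (by norm_num)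
    have h2nt : ∀ n : ℕ, ((2 : ℝ≥0∞) ^ n) ≠ ⊤ := fun n =>
      ENNReal.pow_ne_top (by norm_num)
    have slb : ∀ n, (2 : ℝ≥0∞) ^ n * μ (B n) ≤ s n := by
      intro n
      rw [hs]
      calc (2 : ℝ≥0∞) ^ n * μ (B n) = ∫⁻ _ in B n, (2 : ℝ≥0∞) ^ n ∂μ := by
            rw [setLIntegral_const]
        _ ≤ ∫⁻ x in B n, wcDeriv μ w φ x ^ (1 - α) ∂μ := by
            refine setLIntegral_mono (hDm.pow_const _) fun x hx => ?_
            calc (2 : ℝ≥0∞) ^ n = (2 : ℝ≥0∞) ^ n * 1 := (mul_one _).symm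
              _ ≤ (2 : ℝ≥0∞) ^ n * (1 + g x * wcDeriv μ w φ x ^ (1 - α)) :=
                  mul_le_mul_right (self_le_add_right _ _) _
              _ ≤ wcDeriv μ w φ x ^ (1 - α) := (hBprop n x hx).1.le
    have sub : ∀ n, s n ≤ (M n : ℝ≥0∞) * μ (B n) := by
      intro n
      rw [hs]
      calc ∫⁻ x in B n, wcDeriv μ w φ x ^ (1 - α) ∂μ
          ≤ ∫⁻ _ in B n, (M n : ℝ≥0∞) ∂μ :=
            setLIntegral_mono measurable_const fun x hx => (hBprop n x hx).2
        _ = (M n : ℝ≥0∞) * μ (B n) := setLIntegral_const _ _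
    have spos : ∀ n, s n ≠ 0 := by
      intro n h0
      have h1 := slb n
      rw [h0, le_zero_iff] at h1
      rcases mul_eq_zero.mp h1 with h2 | h2
      · exact h2n0 n h2
      · exact hB0 n h2
    have sfin : ∀ n, s n ≠ ⊤ := fun n =>
      (lt_of_le_of_lt (sub n) (ENNReal.mul_lt_top (ENNReal.natCast_lt_top _) (hBfin n))).ne
    set F : X → ℝ≥0∞ := fun x => ∑' n, (B n).indicator (fun _ => (s n)⁻¹) x with hF
    have measF : Measurable F := by
      rw [hF]
      exact Measurable.ennreal_tsum fun n => measurable_const.indicator (hBm n)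
    have geo : ∑' n : ℕ, ((2 : ℝ≥0∞) ^ n)⁻¹ < ⊤ := by
      have hip : ∀ n : ℕ, ((2 : ℝ≥0∞) ^ n)⁻¹ = ((2 : ℝ≥0∞)⁻¹) ^ n := fun n =>
        ENNReal.inv_pow
      simp_rw [hip]
      rw [ENNReal.tsum_geometric, ENNReal.one_sub_inv_two, inv_inv]
      exact ENNReal.ofNat_lt_top
    have hstep : ∀ n, μ (B n) ≤ ((2 : ℝ≥0∞) ^ n)⁻¹ * s n := by
      intro n
      have h1 := mul_le_mul_right (slb n) ((2 : ℝ≥0∞) ^ n)⁻¹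
      rwa [← mul_assoc, ENNReal.inv_mul_cancel (h2n0 n) (h2nt n), one_mul] at h1
    have EN : ∫⁻ x, F x ∂μ = ∑' n, (s n)⁻¹ * μ (B n) := by
      rw [hF, lintegral_tsum fun n => (measurable_const.indicator (hBm n)).aemeasurable]
      exact tsum_congr fun n => by
        rw [lintegral_indicator (hBm n), setLIntegral_const]
    have ENfin : ∫⁻ x, F x ∂μ < ⊤ := by
      rw [EN]
      refine lt_of_le_of_lt (ENNReal.tsum_le_tsum fun n => ?_) geo
      calc (s n)⁻¹ * μ (B n) ≤ (s n)⁻¹ * (((2 : ℝ≥0∞) ^ n)⁻¹ * s n) :=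
            mul_le_mul_right (hstep n) _
        _ = ((2 : ℝ≥0∞) ^ n)⁻¹ * ((s n)⁻¹ * s n) := by ring
        _ = ((2 : ℝ≥0∞) ^ n)⁻¹ := by
            rw [ENNReal.inv_mul_cancel (spos n) (sfin n), mul_one]
    have EA : ∫⁻ x, wcDeriv μ w φ x ^ (1 - α) * F x ∂μ = ⊤ := by
      have hFeq : ∀ x, wcDeriv μ w φ x ^ (1 - α) * F x
          = ∑' n, (B n).indicator (fun y => (s n)⁻¹ * wcDeriv μ w φ y ^ (1 - α)) x := by
        intro x
        rw [hF]
        dsimp only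
        rw [← ENNReal.tsum_mul_left]
        exact tsum_congr fun n => by
          by_cases hx : x ∈ B n
          · simp [Set.indicator_of_mem hx, mul_comm]
          · simp [Set.indicator_of_notMem hx]
      rw [lintegral_congr hFeq, lintegral_tsum (f := fun n x => (B n).indicator
          (fun y => (s n)⁻¹ * wcDeriv μ w φ y ^ (1 - α)) x) fun n =>
        ((measurable_const.mul (hDm.pow_const _)).indicator (hBm n)).aemeasurable]
      have each : ∀ n : ℕ, ∫⁻ x, (B n).indicator
          (fun y => (s n)⁻¹ * wcDeriv μ w φ y ^ (1 - α)) x ∂μ = 1 := by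
        intro n
        rw [lintegral_indicator (hBm n), lintegral_const_mul _ (hDm.pow_const _)]
        exact ENNReal.inv_mul_cancel (spos n) (sfin n)
      rw [tsum_congr each]
      exact ENNReal.tsum_const_eq_top_of_ne_zero one_ne_zero
    have EB : ∫⁻ x, g x * wcDeriv μ w φ x ^ (1 - α) * F x ∂μ < ⊤ := by
      have hFeq : ∀ x, g x * wcDeriv μ w φ x ^ (1 - α) * F x
          = ∑' n, (B n).indicator
              (fun y => (s n)⁻¹ * (g y * wcDeriv μ w φ y ^ (1 - α))) x := by
        intro x
        rw [hF]
        dsimp only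
        rw [← ENNReal.tsum_mul_left]
        exact tsum_congr fun n => by
          by_cases hx : x ∈ B n
          · simp [Set.indicator_of_mem hx]; ring
          · simp [Set.indicator_of_notMem hx]
      rw [lintegral_congr hFeq, lintegral_tsum (f := fun n x => (B n).indicator
          (fun y => (s n)⁻¹ * (g y * wcDeriv μ w φ y ^ (1 - α))) x) fun n =>
        ((measurable_const.mul (hg.1.mul (hDm.pow_const _))).indicator (hBm n)).aemeasurable]
      refine lt_of_le_of_lt (ENNReal.tsum_le_tsum fun n => ?_) geo
      rw [lintegral_indicator (hBm n), lintegral_const_mul _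
        (show Measurable fun x => g x * wcDeriv μ w φ x ^ (1 - α) from hg.1.mul (hDm.pow_const _))]
      have tn_le : ∫⁻ x in B n, g x * wcDeriv μ w φ x ^ (1 - α) ∂μ
          ≤ ((2 : ℝ≥0∞) ^ n)⁻¹ * s n := by
        rw [hs]
        calc ∫⁻ x in B n, g x * wcDeriv μ w φ x ^ (1 - α) ∂μ
            ≤ ∫⁻ x in B n, ((2 : ℝ≥0∞) ^ n)⁻¹ * wcDeriv μ w φ x ^ (1 - α) ∂μ := by
              refine setLIntegral_mono (measurable_const.mul (hDm.pow_const _))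
                fun x hx => ?_
              have h3 : (2 : ℝ≥0∞) ^ n * (g x * wcDeriv μ w φ x ^ (1 - α))
                  ≤ wcDeriv μ w φ x ^ (1 - α) :=
                le_trans (mul_le_mul_right (le_add_self) _) (hBprop n x hx).1.le
              have h4 := mul_le_mul_right h3 ((2 : ℝ≥0∞) ^ n)⁻¹
              rwa [← mul_assoc, ENNReal.inv_mul_cancel (h2n0 n) (h2nt n), one_mul] at h4
          _ = ((2 : ℝ≥0∞) ^ n)⁻¹ * ∫⁻ x in B n, wcDeriv μ w φ x ^ (1 - α) ∂μ :=
              lintegral_const_mul _ (hDm.pow_const _)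
      calc (s n)⁻¹ * ∫⁻ x in B n, g x * wcDeriv μ w φ x ^ (1 - α) ∂μ
          ≤ (s n)⁻¹ * (((2 : ℝ≥0∞) ^ n)⁻¹ * s n) := mul_le_mul_right tn_le _
        _ = ((2 : ℝ≥0∞) ^ n)⁻¹ * ((s n)⁻¹ * s n) := by ring
        _ = ((2 : ℝ≥0∞) ^ n)⁻¹ := by
            rw [ENNReal.inv_mul_cancel (spos n) (sfin n), mul_one]
    set f : X → ℂ := fun x => ((Real.sqrt (F x).toReal : ℝ) : ℂ) with hfdef
    have hfm : Measurable f := by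
      rw [hfdef]
      exact Complex.measurable_ofReal.comp (measF.ennreal_toReal.sqrt)
    have hFf : ∀ᵐ x ∂μ, (‖f x‖₊ : ℝ≥0∞) ^ 2 = F x := by
      filter_upwards [ae_lt_top measF ENfin.ne] with x hx
      rw [hfdef]
      dsimp only
      rw [Complex.nnnorm_real, ← enorm_eq_nnnorm, Real.enorm_eq_ofReal (Real.sqrt_nonneg _),
        ← ENNReal.ofReal_pow (Real.sqrt_nonneg _), Real.sq_sqrt ENNReal.toReal_nonneg,
        ENNReal.ofReal_toReal hx.ne]
    have tN : ∫⁻ x, (‖f x‖₊ : ℝ≥0∞) ^ 2 ∂μ = ∫⁻ x, F x ∂μ :=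
      lintegral_congr_ae (hFf.mono fun x hx => hx)
    have tA : ∫⁻ x, wcDeriv μ w φ x ^ (1 - α) * (‖f x‖₊ : ℝ≥0∞) ^ 2 ∂μ
        = ∫⁻ x, wcDeriv μ w φ x ^ (1 - α) * F x ∂μ :=
      lintegral_congr_ae (hFf.mono fun x hx => by dsimp only; rw [hx])
    have tB : ∫⁻ x, g x * wcDeriv μ w φ x ^ (1 - α) * (‖f x‖₊ : ℝ≥0∞) ^ 2 ∂μ
        = ∫⁻ x, g x * wcDeriv μ w φ x ^ (1 - α) * F x ∂μ :=
      lintegral_congr_ae (hFf.mono fun x hx => by dsimp only; rw [hx])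
    have hpair : MemLp f 2 μ ∧ MemLp (fun x => wcAlpha μ w φ α x * f (φ x)) 2 μ := by
      rw [awc_PAIR hw hφ habs hfin hα hE hg hfm EventuallyEq.rfl]
      constructor
      · rw [tN]; exact ENfin
      · rw [tB]; exact EB
    have hdom := (H f hfm.aestronglyMeasurable).mpr hpair
    have hred := (awc_DOM hw hφ habs hfin hα hE hg hfm EventuallyEq.rfl).mp hdom
    have hAfin := hred.2.1
    rw [tA, EA] at hAfin
    exact absurd hAfin (lt_irrefl ⊤)
  · rintro ⟨c, hc, hineq⟩ f hf
    obtain ⟨f', hf'm, hff'⟩ := hf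
    have hf' : Measurable f' := hf'm.measurable
    rw [awc_DOM hw hφ habs hfin hα hE hg hf' hff',
      awc_PAIR hw hφ habs hfin hα hE hg hf' hff']
    constructor
    · rintro ⟨h1, _, h3⟩
      exact ⟨h1, h3⟩
    · rintro ⟨h1, h3⟩
      refine ⟨h1, ?_, h3⟩
      have key : ∫⁻ x, wcDeriv μ w φ x ^ (1 - α) * (‖f' x‖₊ : ℝ≥0∞) ^ 2 ∂μ
          ≤ ∫⁻ x, (c : ℝ≥0∞) * (‖f' x‖₊ : ℝ≥0∞) ^ 2 +
              (c : ℝ≥0∞) * (g x * wcDeriv μ w φ x ^ (1 - α) * (‖f' x‖₊ : ℝ≥0∞) ^ 2) ∂μ := by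
        refine lintegral_mono_ae (hineq.mono fun x hx => ?_)
        calc wcDeriv μ w φ x ^ (1 - α) * (‖f' x‖₊ : ℝ≥0∞) ^ 2
            ≤ ((c : ℝ≥0∞) * (1 + g x * wcDeriv μ w φ x ^ (1 - α))) * (‖f' x‖₊ : ℝ≥0∞) ^ 2 :=
              mul_le_mul_left hx _
          _ = (c : ℝ≥0∞) * (‖f' x‖₊ : ℝ≥0∞) ^ 2 +
              (c : ℝ≥0∞) * (g x * wcDeriv μ w φ x ^ (1 - α) * (‖f' x‖₊ : ℝ≥0∞) ^ 2) := by
              ring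
      have hFm : Measurable fun x => (‖f' x‖₊ : ℝ≥0∞) ^ 2 :=
        (hf'.nnnorm.coe_nnreal_ennreal).pow_const 2
      rw [lintegral_add_left
          (show Measurable fun x => (c : ℝ≥0∞) * (‖f' x‖₊ : ℝ≥0∞) ^ 2 from measurable_const.mul hFm),
        lintegral_const_mul _ hFm,
        lintegral_const_mul _ (show Measurable fun x =>
          g x * wcDeriv μ w φ x ^ (1 - α) * (‖f' x‖₊ : ℝ≥0∞) ^ 2 from
          (hg.1.mul (awc_meas_h.pow_const _)).mul hFm)] at key
      exact lt_of_le_of_lt key (ENNReal.add_lt_top.mpr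
        ⟨ENNReal.mul_lt_top ENNReal.coe_lt_top h1,
         ENNReal.mul_lt_top ENNReal.coe_lt_top h3⟩)

end Main


/-- `Δ_α(C_{φ,w}) = C_{φ,w_α}` (equivalently, `Δ_α(C_{φ,w})` is closed;
since the inclusion `Δ_α(C_{φ,w}) ⊆ C_{φ,w_α}` always holds, equality amounts to equality
of the domains) iff `h^{1-α} ≤ c(1 + E_{φ,w}(h^α)∘φ⁻¹ · h^{1-α})` a.e. `[μ]` for some
constant `c ∈ (0,∞)`. -/
theorem aluthge_wco_transform_eq_iff
    (μ : Measure X) [SigmaFinite μ] (w : X → ℂ) (φ : X → X)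
    (hw : Measurable w) (hφ : Measurable φ)
    (habs : (wcMeasure μ w).map φ ≪ μ)
    (hfin : ∀ᵐ x ∂μ, wcDeriv μ w φ x < ⊤)
    (α : ℝ) (hα : α ∈ Set.Ioc (0 : ℝ) 1)
    (E g : X → ℝ≥0∞)
    (hE : IsCondExp φ (wcMeasure μ w) (fun x => wcDeriv μ w φ x ^ α) E)
    (hg : IsQuot φ μ (wcMeasure μ w) (wcDeriv μ w φ) E g) :
    (∀ f : X → ℂ, AEStronglyMeasurable f μ →
      (aluthgeDom μ w φ α f ↔
        (MemLp f 2 μ ∧ MemLp (fun x => wcAlpha μ w φ α x * f (φ x)) 2 μ))) ↔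
    ∃ c : ℝ≥0, 0 < c ∧ ∀ᵐ x ∂μ,
      wcDeriv μ w φ x ^ (1 - α) ≤
        (c : ℝ≥0∞) * (1 + g x * wcDeriv μ w φ x ^ (1 - α)) :=
  aluthge_wco_transform_eq_iff' μ w φ hw hφ habs hfin α hα E g hE hg
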